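/- Every biangular unit-norm tight frame is equidistributed: if F = {f_1, ..., f_n} is a unit-norm tight frame for F^m whose frame angle set is {alpha_1, alpha_2} with alpha_1 not equal to alpha_2, then there exist positive integers tau_1 and tau_2 such that for every j in {1, ..., n} and every l in {1, 2}, the number of indices j' not equal to j with |<f_j, f_{j'}>| = alpha_l equals tau_l; moreover tau_1 * alpha_1^2 + tau_2 * alpha_2^2 = (n - m)/m and tau_1 + tau_2 = n - 1. -/

import Mathlib

open Finset

/-- Every biangular unit-norm tight frame is equidistributed: if
`F = {f_1, ..., f_n}` is a unit-norm `a`-tight frame for `𝔽^m` whose frame angle set is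
`{α₁, α₂}` with `α₁ ≠ α₂`, then there exist positive integers `τ₁, τ₂` such that for every
`j` and `l ∈ {1,2}` the number of `j' ≠ j` with `|⟨f_j, f_{j'}⟩| = α_l` equals `τ_l`;
moreover `τ₁ α₁² + τ₂ α₂² = (n-m)/m` and `τ₁ + τ₂ = n - 1`. -/
theorem statement1 {𝕜 : Type*} [RCLike 𝕜] {m n : ℕ}
    (f : Fin n → EuclideanSpace 𝕜 (Fin m)) (a : ℝ) (α₁ α₂ : ℝ)
    (h_span : Submodule.span 𝕜 (Set.range f) = ⊤)
    (h_norm : ∀ j, ‖f j‖ = 1)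
    (h_tight : ∀ v : EuclideanSpace 𝕜 (Fin m),
      ∑ j, (inner 𝕜 (f j) v : 𝕜) • f j = (a : 𝕜) • v)
    (h_angles : {r : ℝ | ∃ j j', j ≠ j' ∧ ‖(inner 𝕜 (f j) (f j') : 𝕜)‖ = r} = {α₁, α₂})
    (h_ne : α₁ ≠ α₂) :
    ∃ τ₁ τ₂ : ℕ, 0 < τ₁ ∧ 0 < τ₂ ∧
      (∀ j, Nat.card {j' : Fin n | j' ≠ j ∧ ‖(inner 𝕜 (f j) (f j') : 𝕜)‖ = α₁} = τ₁) ∧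
      (∀ j, Nat.card {j' : Fin n | j' ≠ j ∧ ‖(inner 𝕜 (f j) (f j') : 𝕜)‖ = α₂} = τ₂) ∧
      (τ₁ : ℝ) * α₁ ^ 2 + (τ₂ : ℝ) * α₂ ^ 2 = ((n : ℝ) - m) / m ∧
      τ₁ + τ₂ = n - 1 := by
  classical
  set g : Fin n → Fin n → ℝ := fun j j' => ‖(inner 𝕜 (f j) (f j') : 𝕜)‖ with hg
  -- every off-diagonal angle is α₁ or α₂
  have hmem : ∀ j j', j ≠ j' → g j j' = α₁ ∨ g j j' = α₂ := by
    intro j j' h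
    have h1 : g j j' ∈ ({α₁, α₂} : Set ℝ) := by
      rw [← h_angles]; exact ⟨j, j', h, rfl⟩
    simpa using h1
  -- witnesses for α₁ and α₂
  have hw₁ : ∃ j j', j ≠ j' ∧ g j j' = α₁ := by
    have h1 : α₁ ∈ ({α₁, α₂} : Set ℝ) := by simp
    rw [← h_angles] at h1; exact h1
  have hw₂ : ∃ j j', j ≠ j' ∧ g j j' = α₂ := by
    have h1 : α₂ ∈ ({α₁, α₂} : Set ℝ) := by simp
    rw [← h_angles] at h1; exact h1
  obtain ⟨j₁, j₁', hne₁, hv₁⟩ := hw₁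
  obtain ⟨j₂, j₂', hne₂, hv₂⟩ := hw₂
  have hα₁ : 0 ≤ α₁ := hv₁ ▸ norm_nonneg _
  have hα₂ : 0 ≤ α₂ := hv₂ ▸ norm_nonneg _
  have hsq : α₁ ^ 2 - α₂ ^ 2 ≠ 0 := by
    intro h
    apply h_ne
    have h' : (α₁ - α₂) * (α₁ + α₂) = 0 := by ring_nf; linarith
    rcases mul_eq_zero.1 h' with h1 | h2
    · linarith
    · linarith
  -- row sums of squared angles
  have key : ∀ i, ∑ j, (g i j) ^ 2 = a := by
    intro i
    have ht := h_tight (f i)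
    have h2 : (inner 𝕜 (f i) (∑ j, (inner 𝕜 (f j) (f i) : 𝕜) • f j) : 𝕜)
        = inner 𝕜 (f i) ((a : 𝕜) • f i) := by rw [ht]
    rw [inner_sum] at h2
    simp only [inner_smul_right] at h2
    have h3 : ∀ j, (inner 𝕜 (f j) (f i) : 𝕜) * inner 𝕜 (f i) (f j) = ((g i j : ℝ) : 𝕜) ^ 2 := by
      intro j
      rw [← inner_conj_symm (f j) (f i), RCLike.conj_mul]
    rw [Finset.sum_congr rfl (fun j _ => h3 j)] at h2
    have h4 : (inner 𝕜 (f i) (f i) : 𝕜) = 1 := by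
      rw [inner_self_eq_norm_sq_to_K, h_norm]; norm_num
    rw [h4, mul_one] at h2
    exact_mod_cast h2
  -- trace identity : a * m = n
  have traceB : a * m = n := by
    have hk : ∀ k : Fin m, ∑ j, ‖f j k‖ ^ 2 = a := by
      intro k
      have ht := h_tight (EuclideanSpace.single k (1 : 𝕜))
      have h2 : (inner 𝕜 (EuclideanSpace.single k (1:𝕜))
            (∑ j, (inner 𝕜 (f j) (EuclideanSpace.single k (1:𝕜)) : 𝕜) • f j) : 𝕜)
          = inner 𝕜 (EuclideanSpace.single k (1:𝕜)) ((a : 𝕜) • EuclideanSpace.single k (1:𝕜)) := by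
        rw [ht]
      rw [inner_sum] at h2
      simp only [inner_smul_right, EuclideanSpace.inner_single_left,
        EuclideanSpace.inner_single_right, map_one, one_mul, mul_one] at h2
      have h3 : ∀ j, (starRingEnd 𝕜) (f j k) * (f j k) = ((‖f j k‖ : ℝ) : 𝕜) ^ 2 := fun j =>
        RCLike.conj_mul _
      rw [Finset.sum_congr rfl (fun j _ => h3 j)] at h2
      simp at h2
      exact_mod_cast h2
    have hsum : ∑ k : Fin m, ∑ j, ‖f j k‖ ^ 2 = (m : ℝ) * a := by
      rw [Finset.sum_congr rfl (fun k _ => hk k)]; simp [mul_comm]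
    rw [Finset.sum_comm] at hsum
    have hrow : ∀ j, ∑ k : Fin m, ‖f j k‖ ^ 2 = 1 := by
      intro j
      have h := h_norm j
      rw [EuclideanSpace.norm_eq] at h
      have h2 := congrArg (fun x : ℝ => x ^ 2) h
      simpa [Real.sq_sqrt (Finset.sum_nonneg (fun k _ => sq_nonneg _))] using h2
    rw [Finset.sum_congr rfl (fun j _ => hrow j)] at hsum
    simp at hsum
    linarith [hsum]
  have hn : 0 < n := Fin.pos j₁
  have hm : (m : ℝ) ≠ 0 := by
    intro h
    rw [h, mul_zero] at traceB
    have : (n : ℝ) ≠ 0 := by positivity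
    exact this traceB.symm
  -- counting sets
  set T₁ : Fin n → Finset (Fin n) :=
    fun j => univ.filter (fun j' => j' ≠ j ∧ g j j' = α₁) with hT₁
  set T₂ : Fin n → Finset (Fin n) :=
    fun j => univ.filter (fun j' => j' ≠ j ∧ g j j' = α₂) with hT₂
  have hsplit : ∀ j, ((T₁ j).card : ℝ) * α₁ ^ 2 + ((T₂ j).card : ℝ) * α₂ ^ 2 = a - 1 ∧
      (T₁ j).card + (T₂ j).card = n - 1 := by
    intro j
    have hdisj : Disjoint (T₁ j) (T₂ j) := by
      rw [Finset.disjoint_left]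
      intro x hx1 hx2
      simp only [hT₁, hT₂, Finset.mem_filter] at hx1 hx2
      exact h_ne (hx1.2.2 ▸ hx2.2.2 ▸ rfl)
    have hunion : T₁ j ∪ T₂ j = univ.erase j := by
      ext x
      simp only [hT₁, hT₂, Finset.mem_union, Finset.mem_filter, Finset.mem_erase,
        Finset.mem_univ, and_true, true_and]
      constructor
      · rintro (⟨h1, _⟩ | ⟨h1, _⟩) <;> exact h1
      · intro h1
        rcases hmem j x (Ne.symm h1) with h | h
        · exact Or.inl ⟨h1, h⟩
        · exact Or.inr ⟨h1, h⟩
    have hcard : (T₁ j).card + (T₂ j).card = n - 1 := by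
      rw [← Finset.card_union_of_disjoint hdisj, hunion, Finset.card_erase_of_mem (mem_univ j),
        Finset.card_univ, Fintype.card_fin]
    refine ⟨?_, hcard⟩
    have hgjj : g j j = 1 := by
      show ‖(inner 𝕜 (f j) (f j) : 𝕜)‖ = 1
      rw [inner_self_eq_norm_sq_to_K, h_norm]
      norm_num
    have hsum1 : ∑ x ∈ univ.erase j, (g j x) ^ 2 = a - 1 := by
      have h0 := Finset.sum_erase_add univ (fun x => (g j x) ^ 2) (mem_univ j)
      simp only [key j] at h0
      have h1 : g j j ^ 2 = 1 := by rw [hgjj]; norm_num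
      linarith
    rw [← hunion, Finset.sum_union hdisj] at hsum1
    have e1 : ∑ x ∈ T₁ j, (g j x) ^ 2 = ((T₁ j).card : ℝ) * α₁ ^ 2 := by
      rw [Finset.sum_congr rfl (fun x hx => by
        simp only [hT₁, Finset.mem_filter] at hx
        rw [hx.2.2])]
      simp [mul_comm]
    have e2 : ∑ x ∈ T₂ j, (g j x) ^ 2 = ((T₂ j).card : ℝ) * α₂ ^ 2 := by
      rw [Finset.sum_congr rfl (fun x hx => by
        simp only [hT₂, Finset.mem_filter] at hx
        rw [hx.2.2])]
      simp [mul_comm]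
    rw [e1, e2] at hsum1
    exact hsum1
  -- constancy
  have hconst₁ : ∀ j k, (T₁ j).card = (T₁ k).card := by
    intro j k
    obtain ⟨e1j, e2j⟩ := hsplit j
    obtain ⟨e1k, e2k⟩ := hsplit k
    have e2 : ((T₁ j).card : ℝ) + ((T₂ j).card : ℝ) = ((T₁ k).card : ℝ) + ((T₂ k).card : ℝ) := by
      exact_mod_cast e2j.trans e2k.symm
    have h5 : ((T₁ j).card : ℝ) * (α₁ ^ 2 - α₂ ^ 2) = ((T₁ k).card : ℝ) * (α₁ ^ 2 - α₂ ^ 2) := by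
      linear_combination e1j - e1k - α₂ ^ 2 * e2
    exact_mod_cast mul_right_cancel₀ hsq h5
  have hconst₂ : ∀ j k, (T₂ j).card = (T₂ k).card := by
    intro j k
    have h1 := hconst₁ j k
    have h2 := (hsplit j).2
    have h3 := (hsplit k).2
    omega
  -- Nat.card conversions
  have hcard₁ : ∀ j, Nat.card {j' : Fin n | j' ≠ j ∧ ‖(inner 𝕜 (f j) (f j') : 𝕜)‖ = α₁}
      = (T₁ j).card := by
    intro j
    rw [Nat.card_eq_fintype_card, Fintype.card_subtype]
    congr 1
  have hcard₂ : ∀ j, Nat.card {j' : Fin n | j' ≠ j ∧ ‖(inner 𝕜 (f j) (f j') : 𝕜)‖ = α₂}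
      = (T₂ j).card := by
    intro j
    rw [Nat.card_eq_fintype_card, Fintype.card_subtype]
    congr 1
  refine ⟨(T₁ j₁).card, (T₂ j₁).card, ?_, ?_, ?_, ?_, ?_, (hsplit j₁).2⟩
  · refine Finset.card_pos.2 ⟨j₁', ?_⟩
    simp only [hT₁, Finset.mem_filter, Finset.mem_univ, true_and]
    exact ⟨Ne.symm hne₁, hv₁⟩
  · rw [hconst₂ j₁ j₂]
    refine Finset.card_pos.2 ⟨j₂', ?_⟩
    simp only [hT₂, Finset.mem_filter, Finset.mem_univ, true_and]
    exact ⟨Ne.symm hne₂, hv₂⟩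
  · intro j; rw [hcard₁ j]; exact hconst₁ j j₁
  · intro j; rw [hcard₂ j]; exact hconst₂ j j₁
  · have h1 := (hsplit j₁).1
    have : a - 1 = ((n : ℝ) - m) / m := by
      field_simp
      linarith [traceB]
    linarith [h1, this]
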